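/- Let $(\sigma, V)$ be an irreducible $4$-dimensional representation of a group $G$ over an algebraically closed field of characteristic not two. Then $\wedge^2 V$ contains no $G$-invariant isotropic $3$-dimensional subspace (with respect to the form $B$ defined by the wedge pairing). -/

import Mathlib

open ExteriorAlgebra

theorem exteriorPower_map_mem {k : Type*} [Field k] {V : Type*} [AddCommGroup V] [Module k V]
    (f : V →ₗ[k] V) {n : ℕ} {x : ExteriorAlgebra k V} (hx : x ∈ ⋀[k]^n V) :
    ExteriorAlgebra.map f x ∈ ⋀[k]^n V := by
  have h1 : Submodule.map (ExteriorAlgebra.map f).toLinearMap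
      (LinearMap.range (ι k : V →ₗ[k] ExteriorAlgebra k V)) ≤
      LinearMap.range (ι k : V →ₗ[k] ExteriorAlgebra k V) := by
    rintro _ ⟨y, hy, rfl⟩
    obtain ⟨v, rfl⟩ := hy
    exact ⟨f v, (ExteriorAlgebra.map_apply_ι f v).symm⟩
  have h2 : Submodule.map (ExteriorAlgebra.map f).toLinearMap (⋀[k]^n V) ≤ ⋀[k]^n V := by
    rw [exteriorPower, Submodule.map_pow]
    exact pow_le_pow_left' h1 n
  exact h2 ⟨x, hx, rfl⟩

/-- The induced action of a linear endomorphism on the second exterior power `⋀²V`. -/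
noncomputable def exMap {k : Type*} [Field k] {V : Type*} [AddCommGroup V] [Module k V]
    (f : V →ₗ[k] V) : (⋀[k]^2 V) →ₗ[k] (⋀[k]^2 V) :=
  (ExteriorAlgebra.map f).toLinearMap.restrict (fun _ hx => exteriorPower_map_mem f hx)

namespace InvIso3
variable {k : Type*} [Field k] {V : Type*} [AddCommGroup V] [Module k V]
variable (b : Module.Basis (Fin 4) k V)

lemma span_exterior (n : ℕ) {x : ExteriorAlgebra k V} (hx : x ∈ ⋀[k]^n V) :
    x ∈ Submodule.span k (Set.range fun f : Fin n → Fin 4 => ιMulti k n (fun i => b (f i))) := by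
  rw [← ιMulti_span_fixedDegree] at hx
  refine Submodule.span_le.2 ?_ hx
  rintro _ ⟨v, rfl⟩
  have hv : ∀ i : Fin n, v i = ∑ j : Fin 4, b.repr (v i) j • b j := by
    intro i; exact (Module.Basis.sum_repr b (v i)).symm
  have : (ιMulti k n) v = (ιMulti k n) (fun i => ∑ j : Fin 4, b.repr (v i) j • b j) := by
    congr 1; funext i; exact hv i
  rw [this]
  have hms := MultilinearMap.map_sum_finset (ιMulti k n (M := V)).toMultilinearMap
    (fun (i : Fin n) (j : Fin 4) => b.repr (v i) j • b j) (fun _ => Finset.univ)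
  simp only [AlternatingMap.coe_multilinearMap] at hms
  rw [hms]
  refine Submodule.sum_mem _ ?_
  intro r _
  have := MultilinearMap.map_smul_univ (ιMulti k n (M := V)).toMultilinearMap
    (fun i => b.repr (v i) (r i)) (fun i => b (r i))
  simp only [AlternatingMap.coe_multilinearMap] at this
  rw [this]
  exact Submodule.smul_mem _ _ (Submodule.subset_span ⟨r, rfl⟩)

lemma iMulti_two (v : Fin 2 → V) : ιMulti k 2 v = ι k (v 0) * ι k (v 1) := by
  rw [ιMulti_apply]
  show (List.ofFn fun i => ι k (v i)).prod = _
  rw [List.ofFn_succ, List.ofFn_succ, List.ofFn_zero]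
  simp

lemma iMulti_four (v : Fin 4 → V) :
    ιMulti k 4 v = ι k (v 0) * (ι k (v 1) * (ι k (v 2) * ι k (v 3))) := by
  rw [ιMulti_apply]
  show (List.ofFn fun i => ι k (v i)).prod = _
  rw [List.ofFn_succ, List.ofFn_succ, List.ofFn_succ, List.ofFn_succ, List.ofFn_zero]
  show _ * (_ * (_ * (_ * 1))) = _
  rw [mul_one]
  rfl

lemma span_four {x : ExteriorAlgebra k V} (hx : x ∈ ⋀[k]^4 V) :
    x ∈ Submodule.span k {ιMulti k 4 (⇑b)} := by
  refine Submodule.span_le.2 ?_ (span_exterior b 4 hx)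
  rintro _ ⟨f, rfl⟩
  simp only []
  show ιMulti k 4 (fun i => b (f i)) ∈ _
  by_cases hf : Function.Injective f
  · have hbij : Function.Bijective f := (Finite.injective_iff_bijective).1 hf
    set σ := Equiv.ofBijective f hbij with hσ
    have : (fun i => b (f i)) = ⇑b ∘ ⇑σ := by funext i; simp [hσ, Equiv.ofBijective]
    rw [this, AlternatingMap.map_perm]
    rcases Int.units_eq_one_or (Equiv.Perm.sign σ) with hs | hs <;> rw [hs]
    · rw [one_smul]; exact Submodule.mem_span_singleton_self _
    · rw [Units.neg_smul, one_smul]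
      exact Submodule.neg_mem _ (Submodule.mem_span_singleton_self _)
  · obtain ⟨i, j, hij, hne⟩ := Function.not_injective_iff.1 hf
    have : ιMulti k 4 (fun i => b (f i)) = 0 :=
      AlternatingMap.map_eq_zero_of_eq _ _ (by rw [hij]) hne
    rw [this]; exact Submodule.zero_mem _

noncomputable def EE (i : Fin 4) : ExteriorAlgebra k V := ι k (b i)
lemma EE_same' (i : Fin 4) : EE b i * EE b i = 0 := ι_sq_zero (b i)
lemma EE_swap' (i j : Fin 4) : EE b i * EE b j = -(EE b j * EE b i) := by
  rw [eq_neg_iff_add_eq_zero]; exact ι_add_mul_swap (b i) (b j)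
lemma EE_same (i : Fin 4) (x : ExteriorAlgebra k V) : EE b i * (EE b i * x) = 0 := by
  rw [← mul_assoc, EE_same', zero_mul]
lemma EE_swap (i j : Fin 4) (x : ExteriorAlgebra k V) :
    EE b i * (EE b j * x) = -(EE b j * (EE b i * x)) := by
  rw [← mul_assoc, EE_swap', neg_mul, mul_assoc]
lemma sw10 (x) : EE b 1 * (EE b 0 * x) = -(EE b 0 * (EE b 1 * x)) := EE_swap b 1 0 x
lemma sw20 (x) : EE b 2 * (EE b 0 * x) = -(EE b 0 * (EE b 2 * x)) := EE_swap b 2 0 x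
lemma sw21 (x) : EE b 2 * (EE b 1 * x) = -(EE b 1 * (EE b 2 * x)) := EE_swap b 2 1 x
lemma sw30 (x) : EE b 3 * (EE b 0 * x) = -(EE b 0 * (EE b 3 * x)) := EE_swap b 3 0 x
lemma sw31 (x) : EE b 3 * (EE b 1 * x) = -(EE b 1 * (EE b 3 * x)) := EE_swap b 3 1 x
lemma sw32 (x) : EE b 3 * (EE b 2 * x) = -(EE b 2 * (EE b 3 * x)) := EE_swap b 3 2 x
lemma sw10' : EE b 1 * EE b 0 = -(EE b 0 * EE b 1) := EE_swap' b 1 0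
lemma sw20' : EE b 2 * EE b 0 = -(EE b 0 * EE b 2) := EE_swap' b 2 0
lemma sw21' : EE b 2 * EE b 1 = -(EE b 1 * EE b 2) := EE_swap' b 2 1
lemma sw30' : EE b 3 * EE b 0 = -(EE b 0 * EE b 3) := EE_swap' b 3 0
lemma sw31' : EE b 3 * EE b 1 = -(EE b 1 * EE b 3) := EE_swap' b 3 1
lemma sw32' : EE b 3 * EE b 2 = -(EE b 2 * EE b 3) := EE_swap' b 3 2

lemma quad_eq : ιMulti k 4 (⇑b) = EE b 0 * (EE b 1 * (EE b 2 * EE b 3)) := iMulti_four ⇑b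

lemma expand2 {x : ExteriorAlgebra k V} (hx : x ∈ ⋀[k]^2 V) :
    ∃ c0 c1 c2 c3 c4 c5 : k, x
      = c0 • (EE b 0 * EE b 1) + c1 • (EE b 0 * EE b 2) + c2 • (EE b 0 * EE b 3)
      + c3 • (EE b 1 * EE b 2) + c4 • (EE b 1 * EE b 3) + c5 • (EE b 2 * EE b 3) := by
  have h : x ∈ Submodule.span k
      (Set.range fun p : Fin 4 × Fin 4 => EE b p.1 * EE b p.2) := by
    refine Submodule.span_le.2 ?_ (span_exterior b 2 hx)
    rintro _ ⟨f, rfl⟩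
    simp only []
    show ιMulti k 2 (fun i => b (f i)) ∈ _
    rw [iMulti_two]
    exact Submodule.subset_span ⟨(f 0, f 1), rfl⟩
  obtain ⟨c, hc⟩ := (Submodule.mem_span_range_iff_exists_fun k).1 h
  refine ⟨c (0,1) - c (1,0), c (0,2) - c (2,0), c (0,3) - c (3,0),
    c (1,2) - c (2,1), c (1,3) - c (3,1), c (2,3) - c (3,2), ?_⟩
  rw [← hc, Fintype.sum_prod_type]
  simp only [Fin.sum_univ_four]
  simp only [EE_same, EE_same', sw10, sw20, sw21, sw30, sw31, sw32, sw10', sw20', sw21',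
    sw30', sw31', sw32', smul_neg, smul_zero, mul_zero, zero_mul, mul_one]
  module

lemma extract3 (hq : EE b 0 * (EE b 1 * (EE b 2 * EE b 3)) ≠ 0) {a0 a1 a2 a3 : k}
    (h : a0 • (EE b 0 * (EE b 1 * EE b 2)) + a1 • (EE b 0 * (EE b 1 * EE b 3))
       + a2 • (EE b 0 * (EE b 2 * EE b 3)) + a3 • (EE b 1 * (EE b 2 * EE b 3)) = 0) :
    a0 = 0 ∧ a1 = 0 ∧ a2 = 0 ∧ a3 = 0 := by
  refine ⟨?_, ?_, ?_, ?_⟩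
  · have := congrArg (fun y => EE b 3 * y) h
    simp only [mul_add, mul_smul_comm, mul_zero, EE_same, EE_same', sw10, sw20, sw21, sw30,
      sw31, sw32, sw10', sw20', sw21', sw30', sw31', sw32', mul_neg, neg_neg, smul_neg,
      smul_zero, zero_mul, add_zero, zero_add, neg_zero, mul_one] at this
    simpa [neg_eq_zero, smul_eq_zero, hq] using this
  · have := congrArg (fun y => EE b 2 * y) h
    simp only [mul_add, mul_smul_comm, mul_zero, EE_same, EE_same', sw10, sw20, sw21, sw30,
      sw31, sw32, sw10', sw20', sw21', sw30', sw31', sw32', mul_neg, neg_neg, smul_neg,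
      smul_zero, zero_mul, add_zero, zero_add, neg_zero, mul_one] at this
    simpa [neg_eq_zero, smul_eq_zero, hq] using this
  · have := congrArg (fun y => EE b 1 * y) h
    simp only [mul_add, mul_smul_comm, mul_zero, EE_same, EE_same', sw10, sw20, sw21, sw30,
      sw31, sw32, sw10', sw20', sw21', sw30', sw31', sw32', mul_neg, neg_neg, smul_neg,
      smul_zero, zero_mul, add_zero, zero_add, neg_zero, mul_one] at this
    simpa [neg_eq_zero, smul_eq_zero, hq] using this
  · have := congrArg (fun y => EE b 0 * y) h
    simp only [mul_add, mul_smul_comm, mul_zero, EE_same, EE_same', sw10, sw20, sw21, sw30,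
      sw31, sw32, sw10', sw20', sw21', sw30', sw31', sw32', mul_neg, neg_neg, smul_neg,
      smul_zero, zero_mul, add_zero, zero_add, neg_zero, mul_one] at this
    simpa [neg_eq_zero, smul_eq_zero, hq] using this

lemma extract2 (hq : EE b 0 * (EE b 1 * (EE b 2 * EE b 3)) ≠ 0) {c0 c1 c2 c3 c4 c5 : k}
    (h : c0 • (EE b 0 * EE b 1) + c1 • (EE b 0 * EE b 2) + c2 • (EE b 0 * EE b 3)
       + c3 • (EE b 1 * EE b 2) + c4 • (EE b 1 * EE b 3) + c5 • (EE b 2 * EE b 3) = 0) :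
    c0 = 0 ∧ c1 = 0 ∧ c2 = 0 ∧ c3 = 0 ∧ c4 = 0 ∧ c5 = 0 := by
  refine ⟨?_, ?_, ?_, ?_, ?_, ?_⟩
  · have := congrArg (fun y => EE b 2 * (EE b 3 * y)) h
    simp only [mul_add, mul_smul_comm, mul_zero, EE_same, EE_same', sw10, sw20, sw21, sw30,
      sw31, sw32, sw10', sw20', sw21', sw30', sw31', sw32', mul_neg, neg_neg, smul_neg,
      smul_zero, zero_mul, add_zero, zero_add, neg_zero, mul_one] at this
    simpa [neg_eq_zero, smul_eq_zero, hq] using this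
  · have := congrArg (fun y => EE b 1 * (EE b 3 * y)) h
    simp only [mul_add, mul_smul_comm, mul_zero, EE_same, EE_same', sw10, sw20, sw21, sw30,
      sw31, sw32, sw10', sw20', sw21', sw30', sw31', sw32', mul_neg, neg_neg, smul_neg,
      smul_zero, zero_mul, add_zero, zero_add, neg_zero, mul_one] at this
    simpa [neg_eq_zero, smul_eq_zero, hq] using this
  · have := congrArg (fun y => EE b 1 * (EE b 2 * y)) h
    simp only [mul_add, mul_smul_comm, mul_zero, EE_same, EE_same', sw10, sw20, sw21, sw30,
      sw31, sw32, sw10', sw20', sw21', sw30', sw31', sw32', mul_neg, neg_neg, smul_neg,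
      smul_zero, zero_mul, add_zero, zero_add, neg_zero, mul_one] at this
    simpa [neg_eq_zero, smul_eq_zero, hq] using this
  · have := congrArg (fun y => EE b 0 * (EE b 3 * y)) h
    simp only [mul_add, mul_smul_comm, mul_zero, EE_same, EE_same', sw10, sw20, sw21, sw30,
      sw31, sw32, sw10', sw20', sw21', sw30', sw31', sw32', mul_neg, neg_neg, smul_neg,
      smul_zero, zero_mul, add_zero, zero_add, neg_zero, mul_one] at this
    simpa [neg_eq_zero, smul_eq_zero, hq] using this
  · have := congrArg (fun y => EE b 0 * (EE b 2 * y)) h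
    simp only [mul_add, mul_smul_comm, mul_zero, EE_same, EE_same', sw10, sw20, sw21, sw30,
      sw31, sw32, sw10', sw20', sw21', sw30', sw31', sw32', mul_neg, neg_neg, smul_neg,
      smul_zero, zero_mul, add_zero, zero_add, neg_zero, mul_one] at this
    simpa [neg_eq_zero, smul_eq_zero, hq] using this
  · have := congrArg (fun y => EE b 0 * (EE b 1 * y)) h
    simp only [mul_add, mul_smul_comm, mul_zero, EE_same, EE_same', sw10, sw20, sw21, sw30,
      sw31, sw32, sw10', sw20', sw21', sw30', sw31', sw32', mul_neg, neg_neg, smul_neg,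
      smul_zero, zero_mul, add_zero, zero_add, neg_zero, mul_one] at this
    simpa [neg_eq_zero, smul_eq_zero, hq] using this

lemma gsame (x : V) (y : ExteriorAlgebra k V) : ι k x * (ι k x * y) = 0 := by
  rw [← mul_assoc, ι_sq_zero, zero_mul]

lemma gswap' (x y : V) : ι k x * ι k y = -(ι k y * ι k x) := by
  rw [eq_neg_iff_add_eq_zero]; exact ι_add_mul_swap x y

lemma gswap (x y : V) (z : ExteriorAlgebra k V) :
    ι k x * (ι k y * z) = -(ι k y * (ι k x * z)) := by
  rw [← mul_assoc, gswap', neg_mul, mul_assoc]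

lemma quad_ne (η : ⋀[k]^4 V) (hη : η ≠ 0) :
    EE b 0 * (EE b 1 * (EE b 2 * EE b 3)) ≠ 0 := by
  intro h
  have hsp := span_four b (η.2)
  rw [quad_eq, h, Submodule.span_zero_singleton] at hsp
  exact hη (Submodule.coe_eq_zero.1 hsp)

lemma plane_core (hq : EE b 0 * (EE b 1 * (EE b 2 * EE b 3)) ≠ 0)
    {ω : ExteriorAlgebra k V} (hω : ω ∈ ⋀[k]^2 V)
    (h0 : ι k (b 0) * ω = 0) (h1 : ι k (b 1) * ω = 0) :
    ω ∈ Submodule.span k {ι k (b 0) * ι k (b 1)} := by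
  obtain ⟨c0, c1, c2, c3, c4, c5, hexp⟩ := expand2 b hω
  have e0 : EE b 0 * ω = c3 • (EE b 0 * (EE b 1 * EE b 2)) + c4 • (EE b 0 * (EE b 1 * EE b 3))
      + c5 • (EE b 0 * (EE b 2 * EE b 3)) + (0 : k) • (EE b 1 * (EE b 2 * EE b 3)) := by
    rw [hexp]
    simp only [mul_add, mul_smul_comm, EE_same, EE_same', sw10, sw20, sw21, sw30, sw31, sw32,
      sw10', sw20', sw21', sw30', sw31', sw32', mul_neg, neg_neg, smul_neg, smul_zero,
      mul_zero, zero_mul, mul_one]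
    module
  have e1 : EE b 1 * ω = (-c1) • (EE b 0 * (EE b 1 * EE b 2)) + (-c2) • (EE b 0 * (EE b 1 * EE b 3))
      + (0 : k) • (EE b 0 * (EE b 2 * EE b 3)) + c5 • (EE b 1 * (EE b 2 * EE b 3)) := by
    rw [hexp]
    simp only [mul_add, mul_smul_comm, EE_same, EE_same', sw10, sw20, sw21, sw30, sw31, sw32,
      sw10', sw20', sw21', sw30', sw31', sw32', mul_neg, neg_neg, smul_neg, smul_zero,
      mul_zero, zero_mul, mul_one]
    module
  have h0' : EE b 0 * ω = 0 := h0
  have h1' : EE b 1 * ω = 0 := h1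
  obtain ⟨hc3, hc4, hc5, -⟩ := extract3 b hq (by rw [← e0, h0'])
  obtain ⟨hc1, hc2, -, -⟩ := extract3 b hq (by rw [← e1, h1'])
  rw [neg_eq_zero] at hc1 hc2
  refine Submodule.mem_span_singleton.2 ⟨c0, ?_⟩
  rw [hexp, hc1, hc2, hc3, hc4, hc5]
  show c0 • (EE b 0 * EE b 1) = _
  simp

lemma exists_ne_ann (hq : EE b 0 * (EE b 1 * (EE b 2 * EE b 3)) ≠ 0)
    {ω : ExteriorAlgebra k V} (hω : ω ∈ ⋀[k]^2 V) (hne : ω ≠ 0) :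
    ∃ i : Fin 4, ι k (b i) * ω ≠ 0 := by
  by_contra hall
  push_neg at hall
  obtain ⟨c0, c1, c2, c3, c4, c5, hexp⟩ := expand2 b hω
  have hE : ∀ i : Fin 4, EE b i * ω = 0 := fun i => hall i
  have key : ∀ i j : Fin 4, EE b i * (EE b j * ω) = 0 := by
    intro i j; rw [hE j, mul_zero]
  have e0 := key 2 3; have e1 := key 1 3; have e2 := key 1 2
  have e3 := key 0 3; have e4 := key 0 2; have e5 := key 0 1
  rw [hexp] at e0 e1 e2 e3 e4 e5
  simp only [mul_add, mul_smul_comm, EE_same, EE_same', sw10, sw20, sw21, sw30, sw31, sw32,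
    sw10', sw20', sw21', sw30', sw31', sw32', mul_neg, neg_neg, smul_neg, smul_zero,
    mul_zero, zero_mul, mul_one, add_zero, zero_add, neg_zero, neg_eq_zero,
    smul_eq_zero] at e0 e1 e2 e3 e4 e5
  have hc0 : c0 = 0 := e0.resolve_right hq
  have hc1 : c1 = 0 := e1.resolve_right hq
  have hc2 : c2 = 0 := e2.resolve_right hq
  have hc3 : c3 = 0 := e3.resolve_right hq
  have hc4 : c4 = 0 := e4.resolve_right hq
  have hc5 : c5 = 0 := e5.resolve_right hq
  apply hne
  rw [hexp, hc0, hc1, hc2, hc3, hc4, hc5]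
  simp

lemma caseB_core (hq : EE b 0 * (EE b 1 * (EE b 2 * EE b 3)) ≠ 0)
    {ω : ExteriorAlgebra k V}
    (hmem : ω ∈ Submodule.span k {EE b 0 * EE b 1, EE b 0 * EE b 2, EE b 1 * EE b 2})
    (hne : ω ≠ 0) {v : V} (hv : ι k v * ω = 0) : b.repr v 3 = 0 := by
  rw [Submodule.mem_span_insert] at hmem
  obtain ⟨α, z₁, hz₁, hω₁⟩ := hmem
  rw [Submodule.mem_span_insert] at hz₁
  obtain ⟨β, z₂, hz₂, hz₁'⟩ := hz₁
  rw [Submodule.mem_span_singleton] at hz₂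
  obtain ⟨γ, hz₂'⟩ := hz₂
  have hωexp : ω = α • (EE b 0 * EE b 1) + β • (EE b 0 * EE b 2) + γ • (EE b 1 * EE b 2) := by
    rw [hω₁, hz₁', ← hz₂']; abel
  set a0 := b.repr v 0; set a1 := b.repr v 1; set a2 := b.repr v 2; set a3 := b.repr v 3
  have hvexp : v = a0 • b 0 + a1 • b 1 + a2 • b 2 + a3 • b 3 := by
    have := Module.Basis.sum_repr b v
    rw [Fin.sum_univ_four] at this
    exact this.symm
  have hιv : ι k v = a0 • EE b 0 + a1 • EE b 1 + a2 • EE b 2 + a3 • EE b 3 := by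
    rw [hvexp]; simp only [map_add, map_smul]; rfl
  have hcomp : ι k v * ω = (a0 * γ - a1 * β + a2 * α) • (EE b 0 * (EE b 1 * EE b 2))
      + (a3 * α) • (EE b 0 * (EE b 1 * EE b 3)) + (a3 * β) • (EE b 0 * (EE b 2 * EE b 3))
      + (a3 * γ) • (EE b 1 * (EE b 2 * EE b 3)) := by
    rw [hιv, hωexp]
    simp only [mul_add, add_mul, smul_mul_assoc, mul_smul_comm, mul_assoc, EE_same, EE_same',
      sw10, sw20, sw21, sw30, sw31, sw32, sw10', sw20', sw21', sw30', sw31', sw32',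
      mul_neg, neg_neg, smul_neg, smul_zero, mul_zero, zero_mul, mul_one]
    module
  obtain ⟨-, h1, h2, h3⟩ := extract3 b hq (by rw [← hcomp, hv])
  rcases mul_eq_zero.1 h1 with h | hα
  · exact h
  rcases mul_eq_zero.1 h2 with h | hβ
  · exact h
  rcases mul_eq_zero.1 h3 with h | hγ
  · exact h
  exfalso; apply hne
  rw [hωexp, hα, hβ, hγ]; simp

lemma sq_expand (c0 c1 c2 c3 c4 c5 : k) :
    (c0 • (EE b 0 * EE b 1) + c1 • (EE b 0 * EE b 2) + c2 • (EE b 0 * EE b 3)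
      + c3 • (EE b 1 * EE b 2) + c4 • (EE b 1 * EE b 3) + c5 • (EE b 2 * EE b 3)) *
    (c0 • (EE b 0 * EE b 1) + c1 • (EE b 0 * EE b 2) + c2 • (EE b 0 * EE b 3)
      + c3 • (EE b 1 * EE b 2) + c4 • (EE b 1 * EE b 3) + c5 • (EE b 2 * EE b 3))
      = (2 * (c0 * c5 - c1 * c4 + c2 * c3)) • (EE b 0 * (EE b 1 * (EE b 2 * EE b 3))) := by
  simp only [mul_add, add_mul, smul_mul_assoc, mul_smul_comm, mul_assoc, EE_same, EE_same',
    sw10, sw20, sw21, sw30, sw31, sw32, sw10', sw20', sw21', sw30', sw31', sw32',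
    mul_neg, neg_neg, smul_neg, smul_zero, mul_zero, zero_mul, mul_one]
  module

lemma coordL (a0 a1 a2 a3 : k) (j : Fin 4) :
    b.repr (a0 • b 0 + a1 • b 1 + a2 • b 2 + a3 • b 3) j = ![a0, a1, a2, a3] j := by
  fin_cases j <;> simp [Module.Basis.repr_self, Finsupp.single_apply]

lemma pair_li {u v : V} {i j : Fin 4} (hu : b.repr u i = 0) (hv : b.repr v i ≠ 0)
    (hu' : b.repr u j ≠ 0) : LinearIndependent k ![u, v] := by
  rw [linearIndependent_fin2]
  constructor
  · show v ≠ 0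
    intro h; apply hv; rw [h]; simp
  · intro a heq
    show False
    simp only [Matrix.cons_val_one, Matrix.head_cons, Matrix.cons_val_zero] at heq
    have h1 : b.repr (a • v) i = b.repr u i := by rw [heq]
    rw [map_smul, Finsupp.smul_apply, hu, smul_eq_mul] at h1
    rcases mul_eq_zero.1 h1 with ha | h
    · subst ha
      rw [zero_smul] at heq
      apply hu'; rw [← heq]; simp
    · exact hv h

lemma rank_core (hq : EE b 0 * (EE b 1 * (EE b 2 * EE b 3)) ≠ 0) (h2 : (2 : k) ≠ 0)
    {ω : ExteriorAlgebra k V} (hω : ω ∈ ⋀[k]^2 V) (hsq : ω * ω = 0) (hne : ω ≠ 0) :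
    ∃ x y : V, LinearIndependent k ![x, y] ∧ ι k x * ω = 0 ∧ ι k y * ω = 0 := by
  obtain ⟨c0, c1, c2, c3, c4, c5, hexp⟩ := expand2 b hω
  have hsq' : (2 * (c0 * c5 - c1 * c4 + c2 * c3)) •
      (EE b 0 * (EE b 1 * (EE b 2 * EE b 3))) = 0 := by
    rw [← sq_expand b c0 c1 c2 c3 c4 c5, ← hexp, hsq]
  have hP : c0 * c5 - c1 * c4 + c2 * c3 = 0 := by
    rcases smul_eq_zero.1 hsq' with h | h
    · rcases mul_eq_zero.1 h with h' | h'
      · exact absurd h' h2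
      · exact h'
    · exact absurd h hq
  set w0 : V := (0:k) • b 0 + c0 • b 1 + c1 • b 2 + c2 • b 3 with hw0
  set w1 : V := (-c0) • b 0 + (0:k) • b 1 + c3 • b 2 + c4 • b 3 with hw1
  set w2 : V := (-c1) • b 0 + (-c3) • b 1 + (0:k) • b 2 + c5 • b 3 with hw2
  set w3 : V := (-c2) • b 0 + (-c4) • b 1 + (-c5) • b 2 + (0:k) • b 3 with hw3
  have hι : ∀ a0 a1 a2 a3 : k, ι k (a0 • b 0 + a1 • b 1 + a2 • b 2 + a3 • b 3)
      = a0 • EE b 0 + a1 • EE b 1 + a2 • EE b 2 + a3 • EE b 3 := by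
    intro a0 a1 a2 a3; simp only [map_add, map_smul]; rfl
  have hann0 : ι k w0 * ω = 0 := by
    have : ι k w0 * ω = (c0 * c5 - c1 * c4 + c2 * c3) • (EE b 1 * (EE b 2 * EE b 3)) := by
      rw [hw0, hι, hexp]
      simp only [mul_add, add_mul, smul_mul_assoc, mul_smul_comm, mul_assoc, EE_same, EE_same',
        sw10, sw20, sw21, sw30, sw31, sw32, sw10', sw20', sw21', sw30', sw31', sw32',
        mul_neg, neg_neg, smul_neg, smul_zero, mul_zero, zero_mul, mul_one, zero_smul,
        add_zero, zero_add]
      module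
    rw [this, hP, zero_smul]
  have hann1 : ι k w1 * ω = 0 := by
    have : ι k w1 * ω = (-(c0 * c5 - c1 * c4 + c2 * c3)) • (EE b 0 * (EE b 2 * EE b 3)) := by
      rw [hw1, hι, hexp]
      simp only [mul_add, add_mul, smul_mul_assoc, mul_smul_comm, mul_assoc, EE_same, EE_same',
        sw10, sw20, sw21, sw30, sw31, sw32, sw10', sw20', sw21', sw30', sw31', sw32',
        mul_neg, neg_neg, smul_neg, smul_zero, mul_zero, zero_mul, mul_one, zero_smul,
        add_zero, zero_add]
      module
    rw [this, hP, neg_zero, zero_smul]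
  have hann2 : ι k w2 * ω = 0 := by
    have : ι k w2 * ω = (c0 * c5 - c1 * c4 + c2 * c3) • (EE b 0 * (EE b 1 * EE b 3)) := by
      rw [hw2, hι, hexp]
      simp only [mul_add, add_mul, smul_mul_assoc, mul_smul_comm, mul_assoc, EE_same, EE_same',
        sw10, sw20, sw21, sw30, sw31, sw32, sw10', sw20', sw21', sw30', sw31', sw32',
        mul_neg, neg_neg, smul_neg, smul_zero, mul_zero, zero_mul, mul_one, zero_smul,
        add_zero, zero_add]
      module
    rw [this, hP, zero_smul]
  have hann3 : ι k w3 * ω = 0 := by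
    have : ι k w3 * ω = (-(c0 * c5 - c1 * c4 + c2 * c3)) • (EE b 0 * (EE b 1 * EE b 2)) := by
      rw [hw3, hι, hexp]
      simp only [mul_add, add_mul, smul_mul_assoc, mul_smul_comm, mul_assoc, EE_same, EE_same',
        sw10, sw20, sw21, sw30, sw31, sw32, sw10', sw20', sw21', sw30', sw31', sw32',
        mul_neg, neg_neg, smul_neg, smul_zero, mul_zero, zero_mul, mul_one, zero_smul,
        add_zero, zero_add]
      module
    rw [this, hP, neg_zero, zero_smul]
  have c00 : b.repr w0 0 = 0 := by rw [hw0, coordL]; rfl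
  have c01 : b.repr w0 1 = c0 := by rw [hw0, coordL]; rfl
  have c02 : b.repr w0 2 = c1 := by rw [hw0, coordL]; rfl
  have c03 : b.repr w0 3 = c2 := by rw [hw0, coordL]; rfl
  have c10 : b.repr w1 0 = -c0 := by rw [hw1, coordL]; rfl
  have c11 : b.repr w1 1 = 0 := by rw [hw1, coordL]; rfl
  have c12 : b.repr w1 2 = c3 := by rw [hw1, coordL]; rfl
  have c13 : b.repr w1 3 = c4 := by rw [hw1, coordL]; rfl
  have c20 : b.repr w2 0 = -c1 := by rw [hw2, coordL]; rfl
  have c21 : b.repr w2 1 = -c3 := by rw [hw2, coordL]; rfl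
  have c22 : b.repr w2 2 = 0 := by rw [hw2, coordL]; rfl
  have c23 : b.repr w2 3 = c5 := by rw [hw2, coordL]; rfl
  have c30 : b.repr w3 0 = -c2 := by rw [hw3, coordL]; rfl
  have c31 : b.repr w3 1 = -c4 := by rw [hw3, coordL]; rfl
  have c32 : b.repr w3 2 = -c5 := by rw [hw3, coordL]; rfl
  have c33 : b.repr w3 3 = 0 := by rw [hw3, coordL]; rfl
  by_cases h0 : c0 = 0
  · by_cases h1 : c1 = 0
    · by_cases h2' : c2 = 0
      · by_cases h3 : c3 = 0
        · by_cases h4 : c4 = 0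
          · by_cases h5 : c5 = 0
            · exfalso; apply hne
              rw [hexp, h0, h1, h2', h3, h4, h5]; simp
            · exact ⟨w2, w3, pair_li b (i := 2) (j := 3) c22 (by rw [c32, neg_ne_zero]; exact h5)
                (by rw [c23]; exact h5), hann2, hann3⟩
          · exact ⟨w1, w3, pair_li b (i := 1) (j := 3) c11 (by rw [c31, neg_ne_zero]; exact h4)
              (by rw [c13]; exact h4), hann1, hann3⟩
        · exact ⟨w1, w2, pair_li b (i := 1) (j := 2) c11 (by rw [c21, neg_ne_zero]; exact h3)
            (by rw [c12]; exact h3), hann1, hann2⟩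
      · exact ⟨w0, w3, pair_li b (i := 0) (j := 3) c00 (by rw [c30, neg_ne_zero]; exact h2')
          (by rw [c03]; exact h2'), hann0, hann3⟩
    · exact ⟨w0, w2, pair_li b (i := 0) (j := 2) c00 (by rw [c20, neg_ne_zero]; exact h1)
        (by rw [c02]; exact h1), hann0, hann2⟩
  · exact ⟨w0, w1, pair_li b (i := 0) (j := 1) c00 (by rw [c10, neg_ne_zero]; exact h0)
      (by rw [c01]; exact h0), hann0, hann1⟩

section Glue
variable [FiniteDimensional k V]

lemma range_pair (x y : V) : Set.range ![x, y] = {x, y} := by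
  ext w; simp [Matrix.range_cons, Matrix.range_empty]; tauto

lemma range_triple (x y z : V) : Set.range ![x, y, z] = {x, y, z} := by
  ext w; simp [Matrix.range_cons, Matrix.range_empty]; tauto

lemma snoc_step (hV : Module.finrank k V = 4) {n : ℕ} {v : Fin n → V}
    (li : LinearIndependent k v) (hn : n < 4) :
    ∃ x, LinearIndependent k (Fin.snoc v x) ∧ x ∉ Submodule.span k (Set.range v) := by
  have hr : Module.finrank k (Submodule.span k (Set.range v)) = n := by
    rw [finrank_span_eq_card li, Fintype.card_fin]
  have hne : Submodule.span k (Set.range v) ≠ ⊤ := by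
    intro h
    rw [h, finrank_top, hV] at hr
    omega
  obtain ⟨x, -, hx⟩ := SetLike.exists_of_lt
    (show Submodule.span k (Set.range v) < ⊤ from lt_top_iff_ne_top.2 hne)
  exact ⟨x, linearIndependent_fin_snoc.2 ⟨li, hx⟩, hx⟩

lemma extend2 (hV : Module.finrank k V = 4) {x y : V} (li : LinearIndependent k ![x, y]) :
    ∃ b' : Module.Basis (Fin 4) k V, b' 0 = x ∧ b' 1 = y := by
  obtain ⟨z, li3, -⟩ := snoc_step hV li (by omega)
  obtain ⟨w, li4, -⟩ := snoc_step hV li3 (by omega)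
  have hcard : Fintype.card (Fin 4) = Module.finrank k V := by simp [hV]
  refine ⟨basisOfLinearIndependentOfCardEqFinrank li4 hcard, ?_, ?_⟩ <;>
    rw [coe_basisOfLinearIndependentOfCardEqFinrank] <;> simp [Fin.snoc] <;> rfl

lemma extend3 (hV : Module.finrank k V = 4) {x y z : V} (li : LinearIndependent k ![x, y, z]) :
    ∃ b' : Module.Basis (Fin 4) k V, b' 0 = x ∧ b' 1 = y ∧ b' 2 = z := by
  obtain ⟨w, li4, -⟩ := snoc_step hV li (by omega)
  have hcard : Fintype.card (Fin 4) = Module.finrank k V := by simp [hV]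
  refine ⟨basisOfLinearIndependentOfCardEqFinrank li4 hcard, ?_, ?_, ?_⟩ <;>
    rw [coe_basisOfLinearIndependentOfCardEqFinrank] <;> simp [Fin.snoc] <;> rfl

lemma plane_glob (hV : Module.finrank k V = 4) (η : ⋀[k]^4 V) (hη : η ≠ 0)
    {x y : V} (li : LinearIndependent k ![x, y]) {ω : ExteriorAlgebra k V}
    (hω : ω ∈ ⋀[k]^2 V) (hx : ι k x * ω = 0) (hy : ι k y * ω = 0) :
    ω ∈ Submodule.span k {ι k x * ι k y} := by
  obtain ⟨b', h0, h1⟩ := extend2 hV li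
  have hq := quad_ne b' η hη
  have := plane_core b' hq hω (by rw [h0]; exact hx) (by rw [h1]; exact hy)
  rwa [h0, h1] at this

lemma rank_glob (hV : Module.finrank k V = 4) (η : ⋀[k]^4 V) (hη : η ≠ 0) (h2 : (2 : k) ≠ 0)
    {ω : ExteriorAlgebra k V} (hω : ω ∈ ⋀[k]^2 V) (hsq : ω * ω = 0) (hne : ω ≠ 0) :
    ∃ x y : V, LinearIndependent k ![x, y] ∧ ι k x * ω = 0 ∧ ι k y * ω = 0 ∧
      ω ∈ Submodule.span k {ι k x * ι k y} := by
  have b₀ : Module.Basis (Fin 4) k V := Module.finBasisOfFinrankEq k V hV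
  obtain ⟨x, y, li, hx, hy⟩ := rank_core b₀ (quad_ne b₀ η hη) h2 hω hsq hne
  exact ⟨x, y, li, hx, hy, plane_glob hV η hη li hω hx hy⟩

lemma meet_lemma (hV : Module.finrank k V = 4) (η : ⋀[k]^4 V) (hη : η ≠ 0)
    {x y x' y' : V} (li : LinearIndependent k ![x, y]) (li' : LinearIndependent k ![x', y'])
    (hprod : (ι k x * ι k y) * (ι k x' * ι k y') = 0) :
    ∃ z : V, z ≠ 0 ∧ z ∈ Submodule.span k {x, y} ∧ z ∈ Submodule.span k {x', y'} := by
  have hnli : ¬ LinearIndependent k ![x, y, x', y'] := by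
    intro li4
    have hcard : Fintype.card (Fin 4) = Module.finrank k V := by simp [hV]
    set b' := basisOfLinearIndependentOfCardEqFinrank li4 hcard with hb'
    have hco := coe_basisOfLinearIndependentOfCardEqFinrank li4 hcard
    have hq := quad_ne b' η hη
    apply hq
    have h0 : b' 0 = x := by rw [hco]; rfl
    have h1 : b' 1 = y := by rw [hco]; rfl
    have h2 : b' 2 = x' := by rw [hco]; rfl
    have h3 : b' 3 = y' := by rw [hco]; rfl
    show ι k (b' 0) * (ι k (b' 1) * (ι k (b' 2) * ι k (b' 3))) = 0
    rw [h0, h1, h2, h3, ← mul_assoc, ← mul_assoc, mul_assoc (ι k x * ι k y)]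
    exact hprod
  obtain ⟨g, hg, i₀, hi₀⟩ := Fintype.not_linearIndependent_iff.1 hnli
  rw [Fin.sum_univ_four] at hg
  simp only [Matrix.cons_val_zero, Matrix.cons_val_one, Matrix.head_cons,
    Matrix.cons_val_two, Matrix.tail_cons, Matrix.cons_val_three] at hg
  refine ⟨g 0 • x + g 1 • y, ?_, Submodule.mem_span_pair.2 ⟨g 0, g 1, rfl⟩, ?_⟩
  · intro hzero
    have h34 : g 2 • x' + g 3 • y' = 0 := by
      have : g 0 • x + g 1 • y + (g 2 • x' + g 3 • y') = 0 := by rw [← hg]; abel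
      rw [hzero, zero_add] at this; exact this
    have e01 : ∀ i : Fin 2, ![g 0, g 1] i = 0 := by
      apply Fintype.linearIndependent_iff.1 li
      rw [Fin.sum_univ_two]
      simpa using hzero
    have e23 : ∀ i : Fin 2, ![g 2, g 3] i = 0 := by
      apply Fintype.linearIndependent_iff.1 li'
      rw [Fin.sum_univ_two]
      simpa using h34
    have z0 : g 0 = 0 := by simpa using e01 0
    have z1 : g 1 = 0 := by simpa using e01 1
    have z2 : g 2 = 0 := by simpa using e23 0
    have z3 : g 3 = 0 := by simpa using e23 1
    fin_cases i₀ <;> simp_all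
  · refine Submodule.mem_span_pair.2 ⟨-(g 2), -(g 3), ?_⟩
    rw [neg_smul, neg_smul, ← neg_add, eq_comm, eq_neg_iff_add_eq_zero]
    rw [← hg]; abel

lemma ann_of_mem {x y v : V} {ω : ExteriorAlgebra k V}
    (hω : ω ∈ Submodule.span k {ι k x * ι k y}) (hv : v ∈ Submodule.span k {x, y}) :
    ι k v * ω = 0 := by
  obtain ⟨c, hc⟩ := Submodule.mem_span_singleton.1 hω
  obtain ⟨a, b', hab⟩ := Submodule.mem_span_pair.1 hv
  have e1 : ι k x * (ι k x * ι k y) = 0 := by rw [← mul_assoc, ι_sq_zero, zero_mul]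
  have e2 : ι k y * (ι k x * ι k y) = 0 := by
    rw [gswap y x (ι k y), ← mul_assoc, mul_assoc (ι k x), ι_sq_zero, mul_zero, neg_zero]
  rw [← hab, ← hc, map_add, map_smul, map_smul, add_mul, smul_mul_assoc, smul_mul_assoc,
    mul_smul_comm, mul_smul_comm, e1, e2]
  simp

lemma prodQ {z p q r s : V} (hr : r ∈ Submodule.span k {z, q}) (hs : s ∈ Submodule.span k {z, p}) :
    ι k r * ι k s ∈ Submodule.span k {ι k z * ι k p, ι k z * ι k q, ι k p * ι k q} := by
  obtain ⟨a, b', hab⟩ := Submodule.mem_span_pair.1 hr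
  obtain ⟨c, d, hcd⟩ := Submodule.mem_span_pair.1 hs
  have g1 : ι k z * ι k z = 0 := ι_sq_zero z
  have g2 : ι k q * ι k z = -(ι k z * ι k q) := gswap' q z
  have g3 : ι k q * ι k p = -(ι k p * ι k q) := gswap' q p
  rw [← hab, ← hcd, map_add, map_smul, map_smul, map_add, map_smul, map_smul,
    add_mul, mul_add, mul_add, smul_mul_assoc, smul_mul_assoc, mul_smul_comm, mul_smul_comm,
    mul_smul_comm, mul_smul_comm, smul_mul_assoc, smul_mul_assoc, g1, g2, g3]
  have m1 : ι k z * ι k p ∈ Submodule.span k {ι k z * ι k p, ι k z * ι k q, ι k p * ι k q} :=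
    Submodule.subset_span (by left; rfl)
  have m2 : ι k z * ι k q ∈ Submodule.span k {ι k z * ι k p, ι k z * ι k q, ι k p * ι k q} :=
    Submodule.subset_span (by right; left; rfl)
  have m3 : ι k p * ι k q ∈ Submodule.span k {ι k z * ι k p, ι k z * ι k q, ι k p * ι k q} :=
    Submodule.subset_span (by right; right; rfl)
  apply Submodule.add_mem
  · apply Submodule.add_mem
    · apply Submodule.smul_mem; apply Submodule.smul_mem
      simpa using Submodule.zero_mem _
    · exact Submodule.smul_mem _ _ (Submodule.smul_mem _ _ m1)
  · apply Submodule.add_mem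
    · apply Submodule.smul_mem; apply Submodule.smul_mem
      exact Submodule.neg_mem _ m2
    · apply Submodule.smul_mem; apply Submodule.smul_mem
      exact Submodule.neg_mem _ m3

end Glue

section Glue2
variable [FiniteDimensional k V]

lemma sub_union {M : Type*} [AddCommGroup M] [Module k M] (A B C : Submodule k M)
    (h : ∀ x ∈ A, x ∈ B ∨ x ∈ C) : (∀ x ∈ A, x ∈ B) ∨ (∀ x ∈ A, x ∈ C) := by
  by_contra hcon
  push_neg at hcon
  obtain ⟨⟨u, hu, hub⟩, ⟨w, hw, hwc⟩⟩ := hcon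
  have huc : u ∈ C := (h u hu).resolve_left hub
  have hwb : w ∈ B := (h w hw).resolve_right hwc
  rcases h (u + w) (Submodule.add_mem _ hu hw) with hB | hC
  · exact hub (by simpa using Submodule.sub_mem _ hB hwb)
  · exact hwc (by simpa using Submodule.sub_mem _ hC huc)

lemma li2_of_not_mem {z s : V} (hz : z ≠ 0) (hs : s ∉ Submodule.span k {z}) :
    LinearIndependent k ![z, s] := by
  rw [linearIndependent_fin2]
  refine ⟨?_, ?_⟩
  · show s ≠ 0
    intro h; exact hs (h ▸ Submodule.zero_mem _)
  · intro a ha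
    simp only [Matrix.cons_val_one, Matrix.head_cons, Matrix.cons_val_zero] at ha
    rcases eq_or_ne a 0 with rfl | hane
    · rw [zero_smul] at ha; exact hz ha.symm
    · apply hs
      rw [Submodule.mem_span_singleton]
      exact ⟨a⁻¹, by rw [← ha, smul_smul, inv_mul_cancel₀ hane, one_smul]⟩

lemma finrank_span_pair {x y : V} (li : LinearIndependent k ![x, y]) :
    Module.finrank k (Submodule.span k {x, y}) = 2 := by
  rw [← range_pair, finrank_span_eq_card li, Fintype.card_fin]

lemma span_eq_of_two_mem {P : Submodule k V} (hP2 : Module.finrank k P = 2) {a c : V}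
    (ha : a ∈ P) (hc : c ∈ P) (li : LinearIndependent k ![a, c]) :
    Submodule.span k {a, c} = P := by
  apply Submodule.eq_of_le_of_finrank_le
  · rw [Submodule.span_le]
    intro w hw
    rcases hw with rfl | hw
    · exact ha
    · rcases hw with rfl; exact hc
  · rw [hP2, finrank_span_pair li]

lemma complete_line {x y z : V} (li : LinearIndependent k ![x, y])
    (hz : z ∈ Submodule.span k {x, y}) (hzne : z ≠ 0) :
    ∃ p, Submodule.span k {z, p} = Submodule.span k {x, y} := by
  obtain ⟨a, b', hab⟩ := Submodule.mem_span_pair.1 hz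
  have hxmem : x ∈ Submodule.span k {x, y} := Submodule.subset_span (by left; rfl)
  have hymem : y ∈ Submodule.span k {x, y} := Submodule.subset_span (by right; rfl)
  by_cases hb : b' = 0
  · have ha : a ≠ 0 := by
      intro h0; apply hzne; rw [← hab, h0, hb, zero_smul, zero_smul, add_zero]
    refine ⟨y, le_antisymm ?_ ?_⟩
    · rw [Submodule.span_le]
      intro w hw
      rcases hw with rfl | hw
      · rw [← hab, hb, zero_smul, add_zero]
        exact Submodule.smul_mem _ _ hxmem
      · rcases hw with rfl; exact hymem
    · rw [Submodule.span_le]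
      intro w hw
      have hzs : z ∈ Submodule.span k {z, y} := Submodule.subset_span (by left; rfl)
      have hys : y ∈ Submodule.span k {z, y} := Submodule.subset_span (by right; rfl)
      rcases hw with rfl | hw
      · have : w = a⁻¹ • z := by
          rw [← hab, hb, zero_smul, add_zero, smul_smul, inv_mul_cancel₀ ha, one_smul]
        rw [this]; exact Submodule.smul_mem _ _ hzs
      · rcases hw with rfl; exact hys
  · refine ⟨x, le_antisymm ?_ ?_⟩
    · rw [Submodule.span_le]
      intro w hw
      rcases hw with rfl | hw
      · rw [← hab]
        exact Submodule.add_mem _ (Submodule.smul_mem _ _ hxmem) (Submodule.smul_mem _ _ hymem)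
      · rcases hw with rfl; exact hxmem
    · rw [Submodule.span_le]
      intro w hw
      have hzs : z ∈ Submodule.span k {z, x} := Submodule.subset_span (by left; rfl)
      have hxs : x ∈ Submodule.span k {z, x} := Submodule.subset_span (by right; rfl)
      rcases hw with rfl | hw
      · exact hxs
      · rcases hw with rfl
        have : w = b'⁻¹ • (z - a • x) := by
          rw [← hab, add_sub_cancel_left, smul_smul, inv_mul_cancel₀ hb, one_smul]
        rw [this]
        exact Submodule.smul_mem _ _ (Submodule.sub_mem _ hzs (Submodule.smul_mem _ _ hxs))

end Glue2


end InvIso3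

open InvIso3 in
set_option maxHeartbeats 2000000 in
/-- If `(σ, V)` is an irreducible `4`-dimensional representation of a group `G`
over an algebraically closed field of characteristic not two, then `⋀²V` contains no
`G`-invariant isotropic `3`-dimensional subspace, with respect to the wedge-pairing form `B`. -/
theorem no_invariant_isotropic_three_space
    {k : Type*} [Field k] [IsAlgClosed k] (h2 : (2 : k) ≠ 0)
    {V : Type*} [AddCommGroup V] [Module k V] [FiniteDimensional k V]
    (hV : Module.finrank k V = 4)
    (η : ⋀[k]^4 V) (hη : η ≠ 0)
    (B : (⋀[k]^2 V) →ₗ[k] (⋀[k]^2 V) →ₗ[k] k)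
    (hB : ∀ ω₁ ω₂ : ⋀[k]^2 V,
      (ω₁ : ExteriorAlgebra k V) * (ω₂ : ExteriorAlgebra k V)
        = B ω₁ ω₂ • (η : ExteriorAlgebra k V))
    {G : Type*} [Group G] (σ : Representation k G V)
    (hirr : ∀ W : Submodule k V, (∀ g : G, ∀ v ∈ W, σ g v ∈ W) → W = ⊥ ∨ W = ⊤) :
    ¬ ∃ W : Submodule k (⋀[k]^2 V), Module.finrank k W = 3 ∧
        (∀ x ∈ W, ∀ y ∈ W, B x y = 0) ∧
        (∀ g : G, ∀ x ∈ W, exMap (σ g) x ∈ W) := by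
  rintro ⟨W, hW3, hiso, hinv⟩
  classical
  set S : Submodule k (ExteriorAlgebra k V) := W.map (Submodule.subtype _) with hSdef
  have hS3 : Module.finrank k S = 3 := by
    rw [hSdef, Submodule.finrank_map_subtype_eq]; exact hW3
  have hSmem : ∀ x ∈ S, x ∈ ⋀[k]^2 V := by rintro _ ⟨w, hw, rfl⟩; exact w.2
  have hSmul : ∀ x ∈ S, ∀ y ∈ S, x * y = 0 := by
    rintro _ ⟨w1, hw1, rfl⟩ _ ⟨w2, hw2, rfl⟩
    show (↑w1 : ExteriorAlgebra k V) * ↑w2 = 0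
    rw [hB w1 w2, hiso w1 hw1 w2 hw2, zero_smul]
  -- group action facts
  have hker : ∀ g : G, LinearMap.ker (σ g : V →ₗ[k] V) = ⊥ := by
    intro g
    rw [LinearMap.ker_eq_bot]
    intro u v huv
    have h := congrArg (σ g⁻¹) huv
    rwa [← Module.End.mul_apply, ← Module.End.mul_apply, ← map_mul, inv_mul_cancel,
      map_one, Module.End.one_apply, Module.End.one_apply] at h
  have hSg : ∀ g : G, ∀ x ∈ S, ExteriorAlgebra.map (σ g) x ∈ S := by
    rintro g _ ⟨w, hw, rfl⟩
    exact ⟨exMap (σ g) w, hinv g w hw, rfl⟩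
  have hSsurj : ∀ g : G, ∀ x ∈ S, ∃ y ∈ S, ExteriorAlgebra.map (σ g) y = x := by
    intro g x hx
    refine ⟨ExteriorAlgebra.map (σ g⁻¹) x, hSg g⁻¹ x hx, ?_⟩
    have hgg : (σ g : V →ₗ[k] V) ∘ₗ (σ g⁻¹ : V →ₗ[k] V) = LinearMap.id := by
      rw [← Module.End.mul_eq_comp, ← map_mul, mul_inv_cancel, map_one]; rfl
    have hcomp := ExteriorAlgebra.map_comp_map (σ g⁻¹ : V →ₗ[k] V) (σ g : V →ₗ[k] V)
    calc ExteriorAlgebra.map (σ g) (ExteriorAlgebra.map (σ g⁻¹) x)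
        = (ExteriorAlgebra.map (σ g)).comp (ExteriorAlgebra.map (σ g⁻¹)) x := rfl
      _ = x := by rw [hcomp, hgg, ExteriorAlgebra.map_id]; rfl
  have hSinj : ∀ g : G, Function.Injective (ExteriorAlgebra.map (σ g) :
      ExteriorAlgebra k V → ExteriorAlgebra k V) := fun g => map_injective_field (hker g)
  -- product of the decomposable generators vanishes
  have key : ∀ (u u' ω ω' : ExteriorAlgebra k V), ω ∈ Submodule.span k {u} →
      ω' ∈ Submodule.span k {u'} → ω ≠ 0 → ω' ≠ 0 → ω * ω' = 0 → u * u' = 0 := by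
    intro u u' ω ω' hu hu' hωne hω'ne hprod
    obtain ⟨c, hc⟩ := Submodule.mem_span_singleton.1 hu
    obtain ⟨c', hc'⟩ := Submodule.mem_span_singleton.1 hu'
    have hcne : c ≠ 0 := by rintro rfl; rw [zero_smul] at hc; exact hωne hc.symm
    have hc'ne : c' ≠ 0 := by rintro rfl; rw [zero_smul] at hc'; exact hω'ne hc'.symm
    rw [← hc, ← hc', smul_mul_smul_comm] at hprod
    rcases smul_eq_zero.1 hprod with h | h
    · exact absurd h (mul_ne_zero hcne hc'ne)
    · exact h
  have b₀ : Module.Basis (Fin 4) k V := Module.finBasisOfFinrankEq k V hV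
  have hq₀ := quad_ne b₀ η hη
  have hSne : S ≠ ⊥ := by
    intro h
    rw [h] at hS3
    rw [finrank_bot] at hS3
    exact absurd hS3 (by norm_num)
  obtain ⟨ω₁, hω₁S, hω₁ne⟩ := Submodule.exists_mem_ne_zero_of_ne_bot hSne
  obtain ⟨x₁, y₁, li₁, hx₁, hy₁, hsp₁⟩ :=
    rank_glob hV η hη h2 (hSmem _ hω₁S) (hSmul _ hω₁S _ hω₁S) hω₁ne
  -- find ω₂ not annihilated by both x₁ y₁
  have hex2 : ∃ ω₂ ∈ S, ¬(ι k x₁ * ω₂ = 0 ∧ ι k y₁ * ω₂ = 0) := by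
    by_contra hall
    push_neg at hall
    have hle : S ≤ Submodule.span k {ι k x₁ * ι k y₁} := by
      intro ω hω
      rcases hall ω hω with ⟨ha, hb⟩
      exact plane_glob hV η hη li₁ (hSmem ω hω) ha hb
    rcases eq_or_ne (ι k x₁ * ι k y₁) 0 with hz0 | hz0
    · rw [hz0, Submodule.span_zero_singleton, le_bot_iff] at hle
      exact hSne hle
    · have := Submodule.finrank_mono (t := Submodule.span k {ι k x₁ * ι k y₁}) hle
      rw [hS3, finrank_span_singleton hz0] at this
      omega
  obtain ⟨ω₂, hω₂S, hω₂n⟩ := hex2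
  have hω₂ne : ω₂ ≠ 0 := by rintro rfl; exact hω₂n ⟨mul_zero _, mul_zero _⟩
  obtain ⟨x₂, y₂, li₂, hx₂, hy₂, hsp₂⟩ :=
    rank_glob hV η hη h2 (hSmem _ hω₂S) (hSmul _ hω₂S _ hω₂S) hω₂ne
  set P₁ : Submodule k V := Submodule.span k {x₁, y₁} with hP₁def
  set P₂ : Submodule k V := Submodule.span k {x₂, y₂} with hP₂def
  have hP₁2 : Module.finrank k P₁ = 2 := finrank_span_pair li₁
  have hP₂2 : Module.finrank k P₂ = 2 := finrank_span_pair li₂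
  have hPne : P₁ ≠ P₂ := by
    intro hEq
    apply hω₂n
    have hx₁P₂ : x₁ ∈ P₂ := hEq ▸ Submodule.subset_span (by left; rfl)
    have hy₁P₂ : y₁ ∈ P₂ := hEq ▸ Submodule.subset_span (by right; rfl)
    exact ⟨ann_of_mem hsp₂ hx₁P₂, ann_of_mem hsp₂ hy₁P₂⟩
  have hprod12 : (ι k x₁ * ι k y₁) * (ι k x₂ * ι k y₂) = 0 :=
    key _ _ _ _ hsp₁ hsp₂ hω₁ne hω₂ne (hSmul _ hω₁S _ hω₂S)
  obtain ⟨z, hzne, hzP₁, hzP₂⟩ := meet_lemma hV η hη li₁ li₂ hprod12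
  obtain ⟨p, hPp⟩ := complete_line li₁ hzP₁ hzne
  obtain ⟨qq, hPq⟩ := complete_line li₂ hzP₂ hzne
  have hqnotP₁ : qq ∉ P₁ := by
    intro hmem
    apply hPne
    have hle : P₂ ≤ P₁ := by
      rw [hP₂def, ← hPq, Submodule.span_le]
      intro w hw
      rcases hw with rfl | hw
      · exact hzP₁
      · rcases hw with rfl; exact hmem
    exact (Submodule.eq_of_le_of_finrank_le hle (by rw [hP₁2, hP₂2])).symm
  have hpnot : p ∉ Submodule.span k {z} := by
    intro hmem
    have hle : P₁ ≤ Submodule.span k {z} := by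
      rw [hP₁def, ← hPp, Submodule.span_le]
      intro w hw
      rcases hw with rfl | hw
      · exact Submodule.mem_span_singleton_self _
      · rcases hw with rfl; exact hmem
    have := Submodule.finrank_mono (t := Submodule.span k {z}) hle
    rw [hP₁2, finrank_span_singleton hzne] at this
    omega
  have lizp : LinearIndependent k ![z, p] := li2_of_not_mem hzne hpnot
  have hqnot' : qq ∉ Submodule.span k (Set.range ![z, p]) := by
    rw [range_pair]
    intro hmem
    apply hqnotP₁
    rw [hP₁def, ← hPp]; exact hmem
  have lizpq : LinearIndependent k ![z, p, qq] := by
    have h := linearIndependent_fin_snoc.2 ⟨lizp, hqnot'⟩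
    have heq : (Fin.snoc ![z, p] qq : Fin 3 → V) = ![z, p, qq] := by
      funext i; fin_cases i <;> simp [Fin.snoc] <;> rfl
    rwa [heq] at h
  obtain ⟨b', hb0, hb1, hb2⟩ := extend3 hV lizpq
  have hq' := quad_ne b' η hη
  have ht : b' 3 ∉ Submodule.span k {z, p, qq} := by
    rw [← hb0, ← hb1, ← hb2]
    intro hmem
    rw [Submodule.mem_span_insert] at hmem
    obtain ⟨a, z₁, hz₁, habc⟩ := hmem
    rw [Submodule.mem_span_insert] at hz₁
    obtain ⟨a', z₂, hz₂, hz₁'⟩ := hz₁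
    rw [Submodule.mem_span_singleton] at hz₂
    obtain ⟨a'', hz₂'⟩ := hz₂
    have hfull : b' 3 = a • b' 0 + a' • b' 1 + a'' • b' 2 := by
      rw [habc, hz₁', ← hz₂']; abel
    have := congrArg (fun w => b'.repr w 3) hfull
    simp [Module.Basis.repr_self, Finsupp.single_apply] at this
  set Q : Submodule k (ExteriorAlgebra k V) :=
    Submodule.span k {ι k z * ι k p, ι k z * ι k qq, ι k p * ι k qq} with hQdef
  have hdich : ∀ ω ∈ S, ι k z * ω = 0 ∨ ω ∈ Q := by
    intro ω hωS
    rcases eq_or_ne ω 0 with rfl | hωne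
    · left; rw [mul_zero]
    obtain ⟨x, y, li, hx, hy, hsp⟩ :=
      rank_glob hV η hη h2 (hSmem ω hωS) (hSmul ω hωS ω hωS) hωne
    have hprod1 : (ι k x * ι k y) * (ι k x₁ * ι k y₁) = 0 :=
      key _ _ _ _ hsp hsp₁ hωne hω₁ne (hSmul _ hωS _ hω₁S)
    have hprod2 : (ι k x * ι k y) * (ι k x₂ * ι k y₂) = 0 :=
      key _ _ _ _ hsp hsp₂ hωne hω₂ne (hSmul _ hωS _ hω₂S)
    obtain ⟨s, hsne, hsP, hsP₁⟩ := meet_lemma hV η hη li li₁ hprod1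
    obtain ⟨r, hrne, hrP, hrP₂⟩ := meet_lemma hV η hη li li₂ hprod2
    by_cases hrs : r ∈ Submodule.span k {s}
    · -- common annihilator z works
      left
      obtain ⟨a, ha⟩ := Submodule.mem_span_singleton.1 hrs
      have hane : a ≠ 0 := by rintro rfl; rw [zero_smul] at ha; exact hrne ha.symm
      have hsP₂ : s ∈ P₂ := by
        have : s = a⁻¹ • r := by rw [← ha, smul_smul, inv_mul_cancel₀ hane, one_smul]
        rw [this]; exact Submodule.smul_mem _ _ hrP₂
      have hsz : s ∈ Submodule.span k {z} := by
        by_contra hns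
        have lizs := li2_of_not_mem hzne hns
        have e1 : Submodule.span k {z, s} = P₁ := span_eq_of_two_mem hP₁2 hzP₁ hsP₁ lizs
        have e2 : Submodule.span k {z, s} = P₂ := span_eq_of_two_mem hP₂2 hzP₂ hsP₂ lizs
        exact hPne (e1 ▸ e2)
      obtain ⟨a', haz⟩ := Submodule.mem_span_singleton.1 hsz
      have ha'ne : a' ≠ 0 := by rintro rfl; rw [zero_smul] at haz; exact hsne haz.symm
      have hzs : z = a'⁻¹ • s := by rw [← haz, smul_smul, inv_mul_cancel₀ ha'ne, one_smul]
      rw [hzs, map_smul, smul_mul_assoc, ann_of_mem hsp hsP, smul_zero]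
    · -- ω lies in Q
      right
      have lisr : LinearIndependent k ![s, r] := li2_of_not_mem hsne hrs
      have hωsp : ω ∈ Submodule.span k {ι k s * ι k r} :=
        plane_glob hV η hη lisr (hSmem ω hωS) (ann_of_mem hsp hsP) (ann_of_mem hsp hrP)
      obtain ⟨c, hc⟩ := Submodule.mem_span_singleton.1 hωsp
      have hrzq : r ∈ Submodule.span k {z, qq} := by rw [hPq]; exact hrP₂
      have hszp : s ∈ Submodule.span k {z, p} := by rw [hPp]; exact hsP₁
      have hrs_mem : ι k r * ι k s ∈ Q := prodQ hrzq hszp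
      have hsr_mem : ι k s * ι k r ∈ Q := by
        rw [gswap' s r]
        exact Submodule.neg_mem _ hrs_mem
      rw [← hc]
      exact Submodule.smul_mem _ _ hsr_mem
  have hd' : ∀ ω ∈ S, ω ∈ LinearMap.ker (LinearMap.mulLeft k (ι k z)) ∨ ω ∈ Q := by
    intro ω hω
    rcases hdich ω hω with h | h
    · left; rw [LinearMap.mem_ker, LinearMap.mulLeft_apply]; exact h
    · right; exact h
  rcases sub_union S (LinearMap.ker (LinearMap.mulLeft k (ι k z))) Q hd' with hA | hB
  · -- Case A : common annihilated line
    set L' : Submodule k V :=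
      { carrier := {v | ∀ ω ∈ S, ι k v * ω = 0}
        add_mem' := fun ha hb ω hω => by
          rw [map_add, add_mul, ha ω hω, hb ω hω, add_zero]
        zero_mem' := fun ω hω => by rw [map_zero, zero_mul]
        smul_mem' := fun c a ha ω hω => by
          rw [map_smul, smul_mul_assoc, ha ω hω, smul_zero] } with hL'def
    have hinvL : ∀ g : G, ∀ v ∈ L', σ g v ∈ L' := by
      intro g v hv ω hω
      obtain ⟨ω', hω'S, hmap⟩ := hSsurj g ω hω
      rw [← hmap, ← map_apply_ι (σ g : V →ₗ[k] V), ← map_mul, hv ω' hω'S, map_zero]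
    rcases hirr L' hinvL with hbot | htop
    · have hzL : z ∈ L' := by
        intro ω hω
        have := hA ω hω
        rw [LinearMap.mem_ker, LinearMap.mulLeft_apply] at this
        exact this
      rw [hbot] at hzL
      exact hzne hzL
    · obtain ⟨i, hi⟩ := exists_ne_ann b₀ hq₀ (hSmem ω₁ hω₁S) hω₁ne
      have hmem : b₀ i ∈ L' := by rw [htop]; trivial
      exact hi (hmem ω₁ hω₁S)
  · -- Case B : common supporting 3-space
    set gens : Set V := {v | ∃ ω ∈ S, ω ≠ 0 ∧ ι k v * ω = 0} with hgensdef
    set U' : Submodule k V := Submodule.span k gens with hU'def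
    have hinvU : ∀ g : G, ∀ v ∈ U', σ g v ∈ U' := by
      intro g v hv
      have hmapgen : (σ g : V →ₗ[k] V) '' gens ⊆ gens := by
        rintro _ ⟨u, ⟨ω, hωS, hωne, hann⟩, rfl⟩
        refine ⟨ExteriorAlgebra.map (σ g) ω, hSg g ω hωS, ?_, ?_⟩
        · intro h0; apply hωne; apply hSinj g; rw [h0, map_zero]
        · rw [← map_apply_ι (σ g : V →ₗ[k] V), ← map_mul, hann, map_zero]
      have hle : Submodule.map (σ g : V →ₗ[k] V) U' ≤ U' := by
        rw [hU'def, Submodule.map_span]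
        exact Submodule.span_mono hmapgen
      exact hle ⟨v, hv, rfl⟩
    rcases hirr U' hinvU with hbot | htop
    · have hx₁g : x₁ ∈ gens := ⟨ω₁, hω₁S, hω₁ne, hx₁⟩
      have hx₁U : x₁ ∈ U' := Submodule.subset_span hx₁g
      rw [hbot] at hx₁U
      have : x₁ ≠ 0 := by
        have := li₁.ne_zero 0
        simpa using this
      exact this hx₁U
    · have hU'le : U' ≤ Submodule.span k {z, p, qq} := by
        rw [hU'def, Submodule.span_le]
        rintro v ⟨ω, hωS, hωne, hann⟩
        have hQmem : ω ∈ Q := hB ω hωS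
        have hQ' : ω ∈ Submodule.span k
            {EE b' 0 * EE b' 1, EE b' 0 * EE b' 2, EE b' 1 * EE b' 2} := by
          show ω ∈ Submodule.span k
            {ι k (b' 0) * ι k (b' 1), ι k (b' 0) * ι k (b' 2), ι k (b' 1) * ι k (b' 2)}
          rw [hb0, hb1, hb2]
          exact hQmem
        have h3 := caseB_core b' hq' hQ' hωne hann
        have hv4 := Module.Basis.sum_repr b' v
        rw [Fin.sum_univ_four, h3, zero_smul, add_zero] at hv4
        rw [← hv4, hb0, hb1, hb2]
        have m0 : z ∈ Submodule.span k {z, p, qq} := Submodule.subset_span (by left; rfl)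
        have m1 : p ∈ Submodule.span k {z, p, qq} :=
          Submodule.subset_span (by right; left; rfl)
        have m2 : qq ∈ Submodule.span k {z, p, qq} :=
          Submodule.subset_span (by right; right; rfl)
        exact Submodule.add_mem _ (Submodule.add_mem _ (Submodule.smul_mem _ _ m0)
          (Submodule.smul_mem _ _ m1)) (Submodule.smul_mem _ _ m2)
      apply ht
      apply hU'le
      rw [htop]
      trivial
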